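/- Let X be a compact metrizable space and ≿ a continuous, complete, antisymmetric preference on X (a continuous linear order). If X is connected and has at least two points, then X is homeomorphic to the closed unit interval [0,1], via a continuous utility representation. -/

import Mathlib

variable {X : Type*}

/-- A set on which the preference is complete. -/
def IsPrefDomain (r : X → X → Prop) (A : Set X) : Prop :=
  ∀ x ∈ A, ∀ y ∈ A, r x y ∨ r y x

/-- A maximal domain of comparability. -/
def IsMaxPrefDomain (r : X → X → Prop) (A : Set X) : Prop :=
  IsPrefDomain r A ∧ ∀ B : Set X, IsPrefDomain r B → A ⊆ B → B = A

/-- Strict preference. -/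
def StrictPref (r : X → X → Prop) (x y : X) : Prop :=
  r x y ∧ ¬ r y x

/-- Gapless preference. -/
def Gapless (r : X → X → Prop) : Prop :=
  ∀ x y, StrictPref r x y → ∃ z, StrictPref r x z ∧ StrictPref r z y

/-- Continuity: upper and lower sets are closed. -/
def ContinuousPref [TopologicalSpace X] (r : X → X → Prop) : Prop :=
  ∀ x : X, IsClosed {y | r y x} ∧ IsClosed {y | r x y}
theorem homeomorphic_to_unit_interval [TopologicalSpace X] [CompactSpace X]
    [TopologicalSpace.MetrizableSpace X] [ConnectedSpace X] [Nontrivial X]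
    (r : X → X → Prop)
    (hrefl : Reflexive r) (htrans : Transitive r) (hanti : AntiSymmetric r)
    (hcomplete : ∀ x y : X, r x y ∨ r y x)
    (hcont : ContinuousPref r) :
    ∃ e : X ≃ₜ Set.Icc (0 : ℝ) 1, ∀ x y : X, r x y ↔ (e y : ℝ) ≤ (e x : ℝ) := by
  classical
  letI lo : LinearOrder X :=
    { le := fun a b => r b a
      le_refl := fun a => hrefl a
      le_trans := fun a b c hab hbc => htrans hbc hab
      le_antisymm := fun a b h1 h2 => hanti h2 h1
      le_total := fun a b => hcomplete b a
      toDecidableLE := fun _ _ => Classical.dec _ }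
  have hIio : ∀ a : X, IsOpen (Set.Iio a) := by
    intro a
    have h : Set.Iio a = {y | r y a}ᶜ := by
      ext y
      simp only [Set.mem_Iio, Set.mem_compl_iff, Set.mem_setOf_eq, lt_iff_not_ge]
      exact Iff.rfl
    rw [h]; exact (hcont a).1.isOpen_compl
  have hIoi : ∀ a : X, IsOpen (Set.Ioi a) := by
    intro a
    have h : Set.Ioi a = {y | r a y}ᶜ := by
      ext y
      simp only [Set.mem_Ioi, Set.mem_compl_iff, Set.mem_setOf_eq, lt_iff_not_ge]
      exact Iff.rfl
    rw [h]; exact (hcont a).2.isOpen_compl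
  haveI hCIic : ClosedIicTopology X := ⟨fun a => (hcont a).2⟩
  haveI hCIci : ClosedIciTopology X := ⟨fun a => (hcont a).1⟩
  -- densely ordered
  have hdense : ∀ x y : X, x < y → ∃ z, x < z ∧ z < y := by
    intro x y hxy
    by_contra h
    push_neg at h
    have hcover : (Set.univ : Set X) ⊆ Set.Iio y ∪ Set.Ioi x := by
      intro z _
      rcases lt_or_ge z y with hz | hz
      · exact Or.inl hz
      · exact Or.inr (lt_of_lt_of_le hxy hz)
    obtain ⟨z, -, hz⟩ := (isPreconnected_univ (α := X)) (Set.Iio y) (Set.Ioi x)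
      (hIio y) (hIoi x) hcover ⟨x, trivial, hxy⟩ ⟨y, trivial, hxy⟩
    exact absurd hz.1 (not_lt.2 (h z hz.2))
  -- least and greatest elements
  obtain ⟨a, -, haLB⟩ := isCompact_univ.exists_isLeast (Set.univ_nonempty (α := X))
  obtain ⟨b, -, hbUB⟩ := isCompact_univ.exists_isGreatest (Set.univ_nonempty (α := X))
  have hax : ∀ x : X, a ≤ x := fun x => haLB (Set.mem_univ x)
  have hxb : ∀ x : X, x ≤ b := fun x => hbUB (Set.mem_univ x)
  have hab : a < b := by
    rcases exists_pair_ne X with ⟨x, y, hxy⟩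
    rcases eq_or_lt_of_le (hax b) with h | h
    · exfalso
      have hba : b ≤ a := h.ge
      have hx := le_antisymm ((hxb x).trans hba) (hax x)
      have hy := le_antisymm ((hxb y).trans hba) (hax y)
      exact hxy (hx.trans hy.symm)
    · exact h
  -- countable dense subset
  obtain ⟨D, hDc, hDd⟩ := TopologicalSpace.exists_countable_dense X
  set s : Set X := D ∩ Set.Ioo a b with hs
  have hmem : ∀ x y : X, x < y → ∃ d ∈ s, x < d ∧ d < y := by
    intro x y hxy
    obtain ⟨z, hz1, hz2⟩ := hdense x y hxy
    obtain ⟨d, hdD, hdO⟩ := hDd.exists_mem_open ((hIoi x).inter (hIio y)) ⟨z, hz1, hz2⟩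
    exact ⟨d, ⟨hdD, lt_of_le_of_lt (hax x) hdO.1, lt_of_lt_of_le hdO.2 (hxb y)⟩,
      hdO.1, hdO.2⟩
  haveI : Countable ↥s := (hDc.mono Set.inter_subset_left).to_subtype
  have hsne : ∃ d : X, d ∈ s := by
    obtain ⟨d, hd, -, -⟩ := hmem a b hab; exact ⟨d, hd⟩
  haveI : Nonempty ↥s := ⟨⟨hsne.choose, hsne.choose_spec⟩⟩
  haveI : DenselyOrdered ↥s := by
    constructor
    rintro ⟨d1, hd1⟩ ⟨d2, hd2⟩ h
    obtain ⟨d, hd, h1, h2⟩ := hmem d1 d2 (Subtype.mk_lt_mk.1 h)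
    exact ⟨⟨d, hd⟩, Subtype.mk_lt_mk.2 h1, Subtype.mk_lt_mk.2 h2⟩
  haveI : NoMinOrder ↥s := by
    constructor
    rintro ⟨d, hd⟩
    obtain ⟨d', hd', -, h2⟩ := hmem a d hd.2.1
    exact ⟨⟨d', hd'⟩, Subtype.mk_lt_mk.2 h2⟩
  haveI : NoMaxOrder ↥s := by
    constructor
    rintro ⟨d, hd⟩
    obtain ⟨d', hd', h1, -⟩ := hmem d b hd.2.2
    exact ⟨⟨d', hd'⟩, Subtype.mk_lt_mk.2 h1⟩
  haveI : Nonempty ↥(Set.Ioo (0:ℚ) 1) := ⟨⟨1/2, by norm_num, by norm_num⟩⟩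
  obtain ⟨σ⟩ := Order.iso_of_countable_dense ↥s ↥(Set.Ioo (0:ℚ) 1)
  set g : ↥s → ℝ := fun d => ((σ d : ℚ) : ℝ) with hg
  have gstrict : StrictMono g := by
    intro d1 d2 h
    have h2 := Subtype.coe_lt_coe.2 (σ.strictMono h)
    simp only [hg]
    exact_mod_cast h2
  have gpos : ∀ d, (0:ℝ) < g d := fun d => by
    simp only [hg]; exact_mod_cast (σ d).2.1
  have glt1 : ∀ d, g d < 1 := fun d => by
    simp only [hg]; exact_mod_cast (σ d).2.2
  have gdense : ∀ w1 w2 : ℝ, 0 ≤ w1 → w1 < w2 → w2 ≤ 1 → ∃ d, w1 < g d ∧ g d < w2 := by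
    intro w1 w2 h0 hlt h1
    obtain ⟨q, hq1, hq2⟩ := exists_rat_btwn hlt
    have hq0 : (0:ℚ) < q := by exact_mod_cast lt_of_le_of_lt h0 hq1
    have hqlt1 : q < 1 := by exact_mod_cast lt_of_lt_of_le hq2 h1
    refine ⟨σ.symm ⟨q, hq0, hqlt1⟩, ?_, ?_⟩
    · simpa [hg, σ.apply_symm_apply] using hq1
    · simpa [hg, σ.apply_symm_apply] using hq2
  -- the utility function
  set A : X → Set ℝ := fun x => insert (0:ℝ) {w | ∃ d : ↥s, (d : X) ≤ x ∧ g d = w} with hA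
  have hbdd : ∀ x, BddAbove (A x) := by
    intro x
    refine ⟨1, ?_⟩
    rintro w (rfl | ⟨d, -, rfl⟩)
    · norm_num
    · exact (glt1 d).le
  have hne : ∀ x, (A x).Nonempty := fun x => ⟨0, Set.mem_insert _ _⟩
  set u : X → ℝ := fun x => sSup (A x) with hu
  have u0 : ∀ x, 0 ≤ u x := fun x => le_csSup (hbdd x) (Set.mem_insert _ _)
  have u1 : ∀ x, u x ≤ 1 := by
    intro x
    refine csSup_le (hne x) ?_
    rintro w (rfl | ⟨d, -, rfl⟩)
    · norm_num
    · exact (glt1 d).le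
  have ud : ∀ d : ↥s, u (d : X) = g d := by
    intro d
    refine IsGreatest.csSup_eq ⟨Set.mem_insert_of_mem _ ⟨d, le_refl _, rfl⟩, ?_⟩
    rintro w (rfl | ⟨d', hd', rfl⟩)
    · exact (gpos d).le
    · exact gstrict.monotone (Subtype.coe_le_coe.1 hd')
  have ustrict : StrictMono u := by
    intro x y hxy
    obtain ⟨d1, hd1, hx1, h1y⟩ := hmem x y hxy
    obtain ⟨d2, hd2, h12, h2y⟩ := hmem d1 y h1y
    have hux : u x ≤ g ⟨d1, hd1⟩ := by
      refine csSup_le (hne x) ?_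
      rintro w (rfl | ⟨d, hd, rfl⟩)
      · exact (gpos _).le
      · exact (gstrict (Subtype.mk_lt_mk.2 (lt_of_le_of_lt hd hx1))).le
    have huy : g ⟨d2, hd2⟩ ≤ u y := le_csSup (hbdd y) (Set.mem_insert_of_mem _ ⟨⟨d2, hd2⟩, h2y.le, rfl⟩)
    exact lt_of_le_of_lt hux (lt_of_lt_of_le (gstrict (Subtype.mk_lt_mk.2 h12)) huy)
  have ua : u a = 0 := by
    have : A a = {0} := by
      ext w
      constructor
      · rintro (rfl | ⟨d, hd, rfl⟩)
        · rfl
        · exact absurd hd (not_le.2 d.2.2.1)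
      · rintro rfl; exact Set.mem_insert _ _
    rw [hu]; simp only; rw [this, csSup_singleton]
  have ub1 : u b = 1 := by
    refine csSup_eq_of_forall_le_of_forall_lt_exists_gt (hne b) ?_ ?_
    · rintro w (rfl | ⟨d, -, rfl⟩)
      · norm_num
      · exact (glt1 d).le
    · intro w hw
      obtain ⟨d, hd1, -⟩ := gdense (max w 0) 1 (le_max_right _ _) (max_lt hw one_pos) le_rfl
      exact ⟨g d, Set.mem_insert_of_mem _ ⟨d, hxb _, rfl⟩, lt_of_le_of_lt (le_max_left _ _) hd1⟩
  have usurj : ∀ t : ℝ, 0 ≤ t → t ≤ 1 → ∃ x, u x = t := by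
    intro t ht0 ht1
    rcases eq_or_lt_of_le ht0 with h0 | h0
    · exact ⟨a, by rw [ua, h0]⟩
    rcases eq_or_lt_of_le ht1 with h1 | h1
    · exact ⟨b, by rw [ub1, h1]⟩
    set S : Set X := {z | u z ≤ t} with hS
    have hUclosed : IsClosed (upperBounds S) := by
      have : upperBounds S = ⋂ w ∈ S, Set.Ici w := by
        ext z; simp [upperBounds, Set.mem_iInter]
      rw [this]
      exact isClosed_biInter fun w _ => isClosed_Ici
    have hbU : b ∈ upperBounds S := fun z _ => hxb z
    obtain ⟨x, hxU, hxLB⟩ := (hUclosed.isCompact).exists_isLeast ⟨b, hbU⟩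
    refine ⟨x, ?_⟩
    rcases lt_trichotomy (u x) t with h | h | h
    · exfalso
      obtain ⟨d, hd1, hd2⟩ := gdense (u x) t (u0 x) h ht1
      have hdS : (d : X) ∈ S := by
        rw [hS]; simp only [Set.mem_setOf_eq, ud d]; exact hd2.le
      have : g d ≤ u x := le_csSup (hbdd x) (Set.mem_insert_of_mem _ ⟨d, hxU hdS, rfl⟩)
      exact absurd this (not_le.2 hd1)
    · exact h
    · exfalso
      obtain ⟨d, hd1, hd2⟩ := gdense t (u x) ht0 h (u1 x)
      obtain ⟨w, hwA, hw⟩ := exists_lt_of_lt_csSup (hne x) hd2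
      rcases hwA with rfl | ⟨d', hd', rfl⟩
      · exact absurd hw (not_lt.2 (gpos d).le)
      · have hdd' : d < d' := gstrict.lt_iff_lt.1 hw
        have hdU : (d : X) ∈ upperBounds S := by
          intro z hz
          have : u z < u (d : X) := by rw [ud d]; exact lt_of_le_of_lt hz hd1
          exact (ustrict.lt_iff_lt.1 this).le
        have h1 : x ≤ (d : X) := hxLB hdU
        have h2 : (d : X) < (d' : X) := Subtype.coe_lt_coe.2 hdd'
        exact absurd (lt_of_le_of_lt h1 (lt_of_lt_of_le h2 hd')) (lt_irrefl x)
  -- continuity of u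
  have hcontu : Continuous u := by
    rw [continuous_iff_coinduced_le]
    refine le_of_le_of_eq (le_generateFrom ?_)
      (OrderTopology.topology_eq_generate_intervals (α := ℝ)).symm
    rintro st ⟨c, rfl | rfl⟩ <;> rw [isOpen_coinduced]
    · -- preimage of Ioi c
      rcases le_or_gt 1 c with hc | hc
      · have : u ⁻¹' Set.Ioi c = ∅ := by
          ext x; simp only [Set.mem_preimage, Set.mem_Ioi, Set.mem_empty_iff_false, iff_false,
            not_lt]
          exact (u1 x).trans hc
        rw [this]; exact isOpen_empty
      rcases lt_or_ge c 0 with hc0 | hc0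
      · have : u ⁻¹' Set.Ioi c = Set.univ := by
          ext x; simp only [Set.mem_preimage, Set.mem_Ioi, Set.mem_univ, iff_true]
          exact lt_of_lt_of_le hc0 (u0 x)
        rw [this]; exact isOpen_univ
      · obtain ⟨x0, hx0⟩ := usurj c hc0 hc.le
        have : u ⁻¹' Set.Ioi c = Set.Ioi x0 := by
          ext x
          simp only [Set.mem_preimage, Set.mem_Ioi, ← hx0]
          exact ustrict.lt_iff_lt
        rw [this]; exact hIoi x0
    · -- preimage of Iio c
      rcases le_or_gt c 0 with hc | hc
      · have : u ⁻¹' Set.Iio c = ∅ := by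
          ext x; simp only [Set.mem_preimage, Set.mem_Iio, Set.mem_empty_iff_false, iff_false,
            not_lt]
          exact hc.trans (u0 x)
        rw [this]; exact isOpen_empty
      rcases lt_or_ge 1 c with hc1 | hc1
      · have : u ⁻¹' Set.Iio c = Set.univ := by
          ext x; simp only [Set.mem_preimage, Set.mem_Iio, Set.mem_univ, iff_true]
          exact lt_of_le_of_lt (u1 x) hc1
        rw [this]; exact isOpen_univ
      · obtain ⟨x0, hx0⟩ := usurj c hc.le hc1
        have : u ⁻¹' Set.Iio c = Set.Iio x0 := by
          ext x
          simp only [Set.mem_preimage, Set.mem_Iio, ← hx0]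
          exact ustrict.lt_iff_lt
        rw [this]; exact hIio x0
  -- assemble
  set v : X → Set.Icc (0:ℝ) 1 := fun x => ⟨u x, u0 x, u1 x⟩ with hv
  have vstrict : StrictMono v := fun x y h => Subtype.mk_lt_mk.2 (ustrict h)
  have vsurj : Function.Surjective v := by
    rintro ⟨t, ht0, ht1⟩
    obtain ⟨x, hx⟩ := usurj t ht0 ht1
    exact ⟨x, Subtype.ext hx⟩
  set φ : X ≃o Set.Icc (0:ℝ) 1 := StrictMono.orderIsoOfSurjective v vstrict vsurj with hφ
  have hφeq : ∀ x, φ x = v x := fun x => rfl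
  have hcontv : Continuous v := hcontu.subtype_mk _
  have hcontφ : Continuous φ.toEquiv := hcontv
  refine ⟨Continuous.homeoOfEquivCompactToT2 hcontφ, ?_⟩
  intro x y
  have : r x y ↔ y ≤ x := Iff.rfl
  rw [this]
  constructor
  · intro h
    exact (ustrict.monotone h : u y ≤ u x)
  · intro h
    exact le_of_not_gt fun hlt => absurd (ustrict hlt) (not_lt.2 h)
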